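/- Let θ_i, θ_r, θ_rl ∈ [0, π/2), φ_r ∈ ℝ and σ_s, σ_r, σ_l > 0. Let ε_s and ε_l be random vectors in ℝ² whose two coordinates are independent with laws N(0, σ_s²) and N(0, σ_l²), respectively, let ε_r be a real random variable with law N(0, σ_r²), and assume ε_s, ε_r, ε_l mutually independent. Set v := (tan θ_r·cos φ_r − tan θ_i, tan θ_r·sin φ_r)ᵀ and define the misalignment vector u := T_{θ_rl}^{-1}·( T_{θ_r} R_{−φ_r} T_{θ_i}^{-1} ε_s − T_{θ_r} R_{−φ_r} v · ε_r − ε_l ). Then E[u] = 0 and the covariance matrix is E[u·uᵀ] = Σ := T_{θ_rl}^{-1}·( σ_s²·T_{θ_r} R_{−φ_r} T_{θ_i}^{-1} T_{θ_i}^{-T} R_{−φ_r}ᵀ T_{θ_r}ᵀ + σ_r²·T_{θ_r} R_{−φ_r} v vᵀ R_{−φ_r}ᵀ T_{θ_r}ᵀ + σ_l²·I₂ )·T_{θ_rl}^{-T}. -/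

import Mathlib

section AuxGaussian
open Real MeasureTheory ProbabilityTheory Filter
open scoped NNReal ENNReal

lemma aux_tendsto_mul_exp {b : ℝ} (hb : 0 < b) :
    Tendsto (fun x : ℝ => x * Real.exp (-b * x ^ 2)) atTop (nhds 0) := by
  have h := rpow_mul_exp_neg_mul_sq_isLittleO_exp_neg hb 1
  simp only [Real.rpow_one] at h
  have h2 : Tendsto (fun x : ℝ => Real.exp (-(1/2) * x)) atTop (nhds 0) := by
    have := Real.tendsto_exp_neg_atTop_nhds_zero.comp
      (tendsto_id.const_mul_atTop (by norm_num : (0:ℝ) < 1/2))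
    refine this.congr (fun x => ?_)
    simp [Function.comp, neg_mul]
  exact h.trans_tendsto h2

lemma aux_integrable_sq_mul {b : ℝ} (hb : 0 < b) :
    Integrable (fun x : ℝ => x ^ 2 * Real.exp (-b * x ^ 2)) := by
  have h := integrable_rpow_mul_exp_neg_mul_sq hb (s := 2) (by norm_num)
  simpa [Real.rpow_natCast] using h

lemma aux_integral_sq_mul {b : ℝ} (hb : 0 < b) :
    ∫ x : ℝ, x ^ 2 * Real.exp (-b * x ^ 2) = (2 * b)⁻¹ * Real.sqrt (π / b) := by
  have hderiv : ∀ x : ℝ, HasDerivAt (fun x : ℝ => x * Real.exp (-b * x ^ 2))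
      (Real.exp (-b * x ^ 2) - 2 * b * (x ^ 2 * Real.exp (-b * x ^ 2))) x := by
    intro x
    have h1 : HasDerivAt (fun x : ℝ => -b * x ^ 2) (-b * (2 * x)) x := by
      simpa using ((hasDerivAt_pow 2 x).const_mul (-b))
    have h2 := (hasDerivAt_id x).mul h1.exp
    exact h2.congr_deriv (by simp only [id_eq]; ring)
  have hf' : Integrable (fun x : ℝ => Real.exp (-b * x ^ 2)
      - 2 * b * (x ^ 2 * Real.exp (-b * x ^ 2))) :=
    (integrable_exp_neg_mul_sq hb).sub ((aux_integrable_sq_mul hb).const_mul _)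
  have htop := aux_tendsto_mul_exp hb
  have hbot : Tendsto (fun x : ℝ => x * Real.exp (-b * x ^ 2)) atBot (nhds 0) := by
    have := (htop.comp tendsto_neg_atBot_atTop).neg
    simp only [Function.comp] at this
    simpa [neg_mul, neg_neg] using this.congr (fun x => by ring_nf)
  have h0 := MeasureTheory.integral_of_hasDerivAt_of_tendsto hderiv hf' hbot htop
  rw [sub_zero] at h0
  have hsub := integral_sub (integrable_exp_neg_mul_sq hb)
    ((aux_integrable_sq_mul hb).const_mul (2*b))
  rw [hsub] at h0
  simp only [integral_const_mul] at h0
  rw [integral_gaussian] at h0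
  have hb2 : (2 * b) ≠ 0 := by positivity
  field_simp at h0 ⊢
  linarith

lemma gaussianReal_withDensity {v : ℝ≥0} (hv : v ≠ 0) :
    gaussianReal 0 v
      = (volume : Measure ℝ).withDensity
          (fun x => ((gaussianPDFReal 0 v x).toNNReal : ℝ≥0∞)) := by
  rw [gaussianReal_of_var_ne_zero _ hv]
  rfl

lemma aux_b_pos {v : ℝ≥0} (hv : v ≠ 0) : (0:ℝ) < (2 * (v:ℝ))⁻¹ := by
  have : (0:ℝ) < (v:ℝ) := lt_of_le_of_ne (v.coe_nonneg) (by exact_mod_cast (Ne.symm hv))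
  positivity

lemma gaussianPDFReal_zero_mean (v : ℝ≥0) (x : ℝ) :
    gaussianPDFReal 0 v x = (Real.sqrt (2 * π * v))⁻¹ * Real.exp (-(2*(v:ℝ))⁻¹ * x ^ 2) := by
  rw [gaussianPDFReal]
  congr 1
  rw [sub_zero, neg_div, neg_mul, div_eq_inv_mul]

lemma gaussianReal_integral_eq (v : ℝ≥0) (hv : v ≠ 0) (g : ℝ → ℝ) :
    ∫ x, g x ∂(gaussianReal 0 v) = ∫ x, gaussianPDFReal 0 v x * g x := by
  rw [gaussianReal_withDensity hv,
    integral_withDensity_eq_integral_smul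
      (measurable_gaussianPDFReal 0 v).real_toNNReal g]
  congr 1
  ext x
  rw [NNReal.smul_def, Real.coe_toNNReal _ (gaussianPDFReal_nonneg 0 v x), smul_eq_mul]

lemma gaussianReal_integrable_id (v : ℝ≥0) :
    Integrable (fun x : ℝ => x) (gaussianReal 0 v) := by
  by_cases hv : v = 0
  · rw [hv, gaussianReal_zero_var]
    exact (integrable_const (0:ℝ)).congr (ae_eq_dirac (fun x : ℝ => x)).symm
  rw [gaussianReal_withDensity hv,
    integrable_withDensity_iff_integrable_smul (measurable_gaussianPDFReal 0 v).real_toNNReal]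
  have hI : Integrable (fun x : ℝ => (Real.sqrt (2 * π * v))⁻¹
      * (x * Real.exp (-(2*(v:ℝ))⁻¹ * x ^ 2))) :=
    (integrable_mul_exp_neg_mul_sq (aux_b_pos hv)).const_mul _
  refine hI.congr (ae_of_all _ fun x => ?_)
  simp only [NNReal.smul_def, smul_eq_mul]
  rw [Real.coe_toNNReal _ (gaussianPDFReal_nonneg 0 v x), gaussianPDFReal_zero_mean]
  ring

lemma gaussianReal_integrable_sq (v : ℝ≥0) :
    Integrable (fun x : ℝ => x * x) (gaussianReal 0 v) := by
  by_cases hv : v = 0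
  · rw [hv, gaussianReal_zero_var]
    exact (integrable_const ((0:ℝ) * 0)).congr (ae_eq_dirac (fun x : ℝ => x * x)).symm
  rw [gaussianReal_withDensity hv,
    integrable_withDensity_iff_integrable_smul (measurable_gaussianPDFReal 0 v).real_toNNReal]
  have hI : Integrable (fun x : ℝ => (Real.sqrt (2 * π * v))⁻¹
      * (x ^ 2 * Real.exp (-(2*(v:ℝ))⁻¹ * x ^ 2))) :=
    (aux_integrable_sq_mul (aux_b_pos hv)).const_mul _
  refine hI.congr (ae_of_all _ fun x => ?_)
  simp only [NNReal.smul_def, smul_eq_mul]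
  rw [Real.coe_toNNReal _ (gaussianPDFReal_nonneg 0 v x), gaussianPDFReal_zero_mean]
  ring

lemma gaussianReal_integral_id (v : ℝ≥0) :
    ∫ x, x ∂(gaussianReal 0 v) = 0 := by
  have hmap : (gaussianReal 0 v).map (fun x => (-1 : ℝ) * x) = gaussianReal 0 v := by
    rw [gaussianReal_map_const_mul]
    norm_num
  have h := MeasureTheory.integral_map (μ := gaussianReal 0 v)
    (φ := fun x => (-1:ℝ) * x) (f := fun x => x)
    (by fun_prop) aestronglyMeasurable_id
  rw [hmap] at h
  simp only [neg_one_mul] at h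
  rw [MeasureTheory.integral_neg] at h
  linarith

lemma gaussianReal_integral_sq (v : ℝ≥0) :
    ∫ x, x * x ∂(gaussianReal 0 v) = v := by
  by_cases hv : v = 0
  · simp [hv]
  rw [gaussianReal_integral_eq v hv]
  have hvpos : (0:ℝ) < (v:ℝ) := lt_of_le_of_ne (v.coe_nonneg) (by exact_mod_cast (Ne.symm hv))
  set b : ℝ := (2*(v:ℝ))⁻¹ with hb
  have hbpos : 0 < b := aux_b_pos hv
  have heq : (fun x : ℝ => gaussianPDFReal 0 v x * (x * x))
      = fun x => (Real.sqrt (2 * π * v))⁻¹ * (x ^ 2 * Real.exp (-b * x ^ 2)) := by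
    ext x
    rw [gaussianPDFReal_zero_mean]
    ring
  rw [heq, integral_const_mul, aux_integral_sq_mul hbpos]
  have h2b : (2 * b)⁻¹ = (v:ℝ) := by
    rw [hb]
    field_simp
  have hpb : π / b = 2 * π * v := by
    rw [hb]
    field_simp
  rw [h2b, hpb]
  rw [← mul_assoc, mul_comm _ (v:ℝ), mul_assoc, inv_mul_cancel₀, mul_one]
  exact Real.sqrt_ne_zero'.mpr (by positivity)

end AuxGaussian


open Real Matrix MeasureTheory ProbabilityTheory

/-- Counter-clockwise rotation matrix `R_τ`. -/
noncomputable def Rot (τ : ℝ) : Matrix (Fin 2) (Fin 2) ℝ :=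
  !![Real.cos τ, -Real.sin τ; Real.sin τ, Real.cos τ]

/-- Transformation matrix `T_τ = diag(cos τ, 1)`. -/
noncomputable def Tm (τ : ℝ) : Matrix (Fin 2) (Fin 2) ℝ :=
  !![Real.cos τ, 0; 0, 1]

set_option maxHeartbeats 2000000 in
/-- Lemma 5 + Eq. (31): the 3D misalignment vector
`u = T_{θ_rl}⁻¹ (T_{θ_r} R_{−φ_r} T_{θ_i}⁻¹ ε_s − T_{θ_r} R_{−φ_r} v ε_r − ε_l)`
has zero mean and covariance matrix
`Σ = T_{θ_rl}⁻¹ (σ_s² T_{θ_r} R_{−φ_r} T_{θ_i}⁻¹ T_{θ_i}⁻ᵀ R_{−φ_r}ᵀ T_{θ_r}ᵀ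
  + σ_r² T_{θ_r} R_{−φ_r} v vᵀ R_{−φ_r}ᵀ T_{θ_r}ᵀ + σ_l² I₂) T_{θ_rl}⁻ᵀ`. -/
theorem misalignment_mean_cov_3D {Ω : Type*} [MeasurableSpace Ω]
    (P : Measure Ω) [IsProbabilityMeasure P]
    (θi θr θrl φr σs σr σl : ℝ)
    (hθi : θi ∈ Set.Ico 0 (π / 2)) (hθr : θr ∈ Set.Ico 0 (π / 2))
    (hθrl : θrl ∈ Set.Ico 0 (π / 2))
    (hσs : 0 < σs) (hσr : 0 < σr) (hσl : 0 < σl)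
    (εsx εsy εr εlx εly : Ω → ℝ)
    (hεsx : Measurable εsx) (hεsy : Measurable εsy) (hεr : Measurable εr)
    (hεlx : Measurable εlx) (hεly : Measurable εly)
    (hlawsx : Measure.map εsx P = gaussianReal 0 (σs ^ 2).toNNReal)
    (hlawsy : Measure.map εsy P = gaussianReal 0 (σs ^ 2).toNNReal)
    (hlawr : Measure.map εr P = gaussianReal 0 (σr ^ 2).toNNReal)
    (hlawlx : Measure.map εlx P = gaussianReal 0 (σl ^ 2).toNNReal)
    (hlawly : Measure.map εly P = gaussianReal 0 (σl ^ 2).toNNReal)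
    (hindep : iIndepFun ![εsx, εsy, εr, εlx, εly] P)
    (v : Fin 2 → ℝ)
    (hv : v = ![Real.tan θr * Real.cos φr - Real.tan θi, Real.tan θr * Real.sin φr])
    (u : Ω → Fin 2 → ℝ)
    (hu : u = fun ω => (Tm θrl)⁻¹.mulVec
        ((Tm θr * Rot (-φr) * (Tm θi)⁻¹).mulVec ![εsx ω, εsy ω]
          - εr ω • ((Tm θr * Rot (-φr)).mulVec v) - ![εlx ω, εly ω])) :
    (∀ i : Fin 2, ∫ ω, u ω i ∂P = 0) ∧
    (∀ i j : Fin 2, ∫ ω, u ω i * u ω j ∂P =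
      ((Tm θrl)⁻¹ *
        (σs ^ 2 • (Tm θr * Rot (-φr) * (Tm θi)⁻¹ * ((Tm θi)⁻¹)ᵀ * (Rot (-φr))ᵀ * (Tm θr)ᵀ)
          + σr ^ 2 • (Tm θr * Rot (-φr) * vecMulVec v v * (Rot (-φr))ᵀ * (Tm θr)ᵀ)
          + σl ^ 2 • (1 : Matrix (Fin 2) (Fin 2) ℝ)) * ((Tm θrl)⁻¹)ᵀ) i j) := by
  classical
  set X : Fin 5 → Ω → ℝ := ![εsx, εsy, εr, εlx, εly] with hX
  set W : Fin 5 → ℝ := ![σs ^ 2, σs ^ 2, σr ^ 2, σl ^ 2, σl ^ 2] with hW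
  have hWnn : ∀ k, 0 ≤ W k := by
    intro k
    fin_cases k <;> simp [hW] <;> positivity
  have hXm : ∀ k, Measurable (X k) := by
    intro k
    fin_cases k <;> assumption
  have hXlaw : ∀ k, Measure.map (X k) P = gaussianReal 0 (W k).toNNReal := by
    intro k
    fin_cases k <;> assumption
  have hXint : ∀ k, Integrable (X k) P := by
    intro k
    have h := gaussianReal_integrable_id (W k).toNNReal
    rw [← hXlaw k] at h
    exact (integrable_map_measure h.aestronglyMeasurable (hXm k).aemeasurable).mp h
  have hXprod : ∀ k l, Integrable (fun ω => X k ω * X l ω) P := by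
    intro k l
    by_cases hkl : k = l
    · subst hkl
      have h := gaussianReal_integrable_sq (W k).toNNReal
      rw [← hXlaw k] at h
      exact (integrable_map_measure h.aestronglyMeasurable (hXm k).aemeasurable).mp h
    · exact (hindep.indepFun hkl).integrable_mul (hXint k) (hXint l)
  have hXmean : ∀ k, ∫ ω, X k ω ∂P = 0 := by
    intro k
    have h := MeasureTheory.integral_map (μ := P) (f := fun x : ℝ => x)
      (hXm k).aemeasurable aestronglyMeasurable_id
    rw [hXlaw k] at h
    rw [← h]
    exact gaussianReal_integral_id _
  have hXcov : ∀ k l, ∫ ω, X k ω * X l ω ∂P = if k = l then W k else 0 := by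
    intro k l
    by_cases hkl : k = l
    · subst hkl
      rw [if_pos rfl]
      have h := MeasureTheory.integral_map (μ := P) (f := fun x : ℝ => x * x)
        (hXm k).aemeasurable (measurable_id.mul measurable_id).aestronglyMeasurable
      rw [hXlaw k] at h
      rw [← h, gaussianReal_integral_sq, Real.coe_toNNReal _ (hWnn k)]
    · rw [if_neg hkl]
      have h := IndepFun.integral_mul_eq_mul_integral (hindep.indepFun hkl)
        (hXint k).aestronglyMeasurable (hXint l).aestronglyMeasurable
      calc ∫ ω, X k ω * X l ω ∂P = ∫ ω, (X k * X l) ω ∂P := rfl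
        _ = (∫ ω, X k ω ∂P) * ∫ ω, X l ω ∂P := h
        _ = 0 := by rw [hXmean k, hXmean l, mul_zero]
  set c : Fin 2 → Fin 5 → ℝ := fun i =>
    ![((Tm θrl)⁻¹ * (Tm θr * Rot (-φr) * (Tm θi)⁻¹)) i 0,
      ((Tm θrl)⁻¹ * (Tm θr * Rot (-φr) * (Tm θi)⁻¹)) i 1,
      -((Tm θrl)⁻¹.mulVec ((Tm θr * Rot (-φr)).mulVec v) i),
      -((Tm θrl)⁻¹ i 0), -((Tm θrl)⁻¹ i 1)] with hc
  have hu' : ∀ ω i, u ω i = ∑ k, c i k * X k ω := by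
    intro ω i
    rw [hu]
    simp only [hc, hX, Matrix.mulVec, Matrix.mul_apply, dotProduct,
      Fin.sum_univ_two, Fin.sum_univ_five, Pi.sub_apply, Pi.smul_apply, smul_eq_mul,
      Matrix.cons_val_zero, Matrix.cons_val_one, Matrix.head_cons,
      Matrix.cons_val_two, Matrix.tail_cons, Matrix.cons_val_three, Matrix.cons_val_four,
      Matrix.head_fin_const]
    ring
  constructor
  · intro i
    simp_rw [hu' _ i]
    rw [integral_finset_sum _ (fun k _ => (hXint k).const_mul _)]
    refine Finset.sum_eq_zero fun k _ => ?_
    rw [MeasureTheory.integral_const_mul, hXmean k, mul_zero]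
  · intro i j
    have hexp : ∀ ω, u ω i * u ω j = ∑ k, ∑ l, c i k * c j l * (X k ω * X l ω) := by
      intro ω
      rw [hu' ω i, hu' ω j, Finset.sum_mul_sum]
      exact Finset.sum_congr rfl fun k _ => Finset.sum_congr rfl fun l _ => by ring
    have hsum : ∫ ω, u ω i * u ω j ∂P = ∑ k, c i k * c j k * W k := by
      simp_rw [hexp]
      have h1 : ∀ k : Fin 5, ∫ ω, ∑ l, c i k * c j l * (X k ω * X l ω) ∂P
          = c i k * c j k * W k := by
        intro k
        rw [integral_finset_sum _ (fun l _ => (hXprod k l).const_mul _)]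
        have h2 : ∀ l : Fin 5, ∫ ω, c i k * c j l * (X k ω * X l ω) ∂P
            = c i k * c j l * (if k = l then W k else 0) := by
          intro l
          rw [MeasureTheory.integral_const_mul, hXcov k l]
        simp_rw [h2, mul_ite, mul_zero]
        rw [Finset.sum_ite_eq Finset.univ k (fun l => c i k * c j l * W k)]
        simp
      rw [integral_finset_sum _ (fun k _ =>
        integrable_finset_sum _ (fun l _ => ((hXprod k l).const_mul _)))]
      exact Finset.sum_congr rfl fun k _ => h1 k
    rw [hsum]
    clear hsum hexp hu' hXcov hXmean hXprod hXint hXlaw hXm hWnn hindep hu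
    clear hlawsx hlawsy hlawr hlawlx hlawly hεsx hεsy hεr hεlx hεly u
    fin_cases i <;> fin_cases j <;>
      · simp only [hc, hW, Matrix.mul_apply, Matrix.add_apply, Matrix.smul_apply,
          Matrix.transpose_apply, Matrix.vecMulVec_apply, Matrix.one_apply, Matrix.mulVec,
          dotProduct, Fin.sum_univ_two, Fin.sum_univ_five, smul_eq_mul,
          Matrix.cons_val_zero, Matrix.cons_val_one, Matrix.head_cons, Matrix.vecHead,
          Matrix.vecTail, Matrix.cons_val_two,
          Function.comp, Fin.mk_zero, Fin.mk_one, Matrix.cons_val]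
        norm_num
        ring
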